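/- Let K ⊆ L be finite fields, C ⊆ L^m a K-linear code with column-space tuple 𝒱 = (V_1,...,V_m) for a generator matrix A, and f : C → L^m a K-linear map with column-space tuple 𝒰 = (U_1,...,U_m). Then f extends to a K-monomial map of L^m if and only if there exists a permutation π ∈ S_m with V_i = U_{π(i)} for all i. -/

import Mathlib

open Module

section Aux

variable {K L : Type*} [Field K] [Field L] [Algebra K L] {k : ℕ}

/-- `ℓ ↦ (i ↦ ℓ (c i))`. -/
noncomputable def Dmap (K : Type*) [Field K] {L : Type*} [Field L] [Algebra K L]
    {k : ℕ} (c : Fin k → L) : Module.Dual K L →ₗ[K] (Fin k → K) :=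
  LinearMap.pi fun i => LinearMap.applyₗ (c i)

@[simp] lemma Dmap_apply (c : Fin k → L) (ℓ : Module.Dual K L) (i : Fin k) :
    Dmap K c ℓ i = ℓ (c i) := rfl

/-- `x ↦ ∑ i, x i • c i`. -/
noncomputable def Tmap (K : Type*) [Field K] {L : Type*} [Field L] [Algebra K L]
    {k : ℕ} (c : Fin k → L) : (Fin k → K) →ₗ[K] L where
  toFun x := ∑ i, x i • c i
  map_add' x y := by simp [add_smul, Finset.sum_add_distrib]
  map_smul' a x := by simp [smul_smul, Finset.smul_sum]

@[simp] lemma Tmap_apply (c : Fin k → L) (x : Fin k → K) :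
    Tmap K c x = ∑ i, x i • c i := rfl

lemma span_eq_range_Dmap {n : ℕ} (b : Basis (Fin n) K L) (c : Fin k → L) :
    Submodule.span K (Set.range fun t : Fin n => fun i : Fin k => b.repr (c i) t)
      = LinearMap.range (Dmap K c) := by
  have h1 : LinearMap.range (Dmap K c)
      = Submodule.map (Dmap K c) (Submodule.span K (Set.range ⇑b.dualBasis)) := by
    rw [b.dualBasis.span_eq, Submodule.map_top]
  have h2 : (⇑(Dmap K c) ∘ ⇑b.dualBasis) = fun t (i : Fin k) => (b.repr (c i)) t := by
    funext t i
    simp [Function.comp, Basis.coe_dualBasis]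
  rw [h1, Submodule.map_span, ← Set.range_comp, h2]

lemma range_Dmap_comp (g : L ≃ₗ[K] L) (c : Fin k → L) :
    LinearMap.range (Dmap K (fun i => g (c i))) = LinearMap.range (Dmap K c) := by
  have h : Dmap K (fun i => g (c i))
      = (Dmap K c).comp (g.dualMap : Module.Dual K L →ₗ[K] Module.Dual K L) := by
    ext ℓ i
    simp [LinearEquiv.dualMap]
  rw [h, LinearMap.range_comp, LinearEquiv.range, Submodule.map_top]

lemma mem_ker_Tmap_iff [FiniteDimensional K L] (c : Fin k → L) (x : Fin k → K) :
    x ∈ LinearMap.ker (Tmap K c)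
      ↔ ∀ y ∈ LinearMap.range (Dmap K c), ∑ i, x i * y i = 0 := by
  rw [LinearMap.mem_ker]
  constructor
  · rintro h - ⟨ℓ, rfl⟩
    have : ℓ (Tmap K c x) = 0 := by rw [h]; simp
    simpa [map_sum, map_smul, smul_eq_mul] using this
  · intro h
    rw [← Module.forall_dual_apply_eq_zero_iff K]
    intro ℓ
    have := h _ ⟨ℓ, rfl⟩
    simpa [map_sum, map_smul, smul_eq_mul] using this

lemma ker_Tmap_eq_of_range_eq [FiniteDimensional K L] {c c' : Fin k → L}
    (h : LinearMap.range (Dmap K c) = LinearMap.range (Dmap K c')) :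
    LinearMap.ker (Tmap K c) = LinearMap.ker (Tmap K c') := by
  ext x
  rw [mem_ker_Tmap_iff, mem_ker_Tmap_iff, h]

/-- From equal kernels, get an automorphism intertwining the two maps. -/
lemma exists_equiv_of_ker_eq [FiniteDimensional K L]
    {M : Type*} [AddCommGroup M] [Module K M]
    {T T' : M →ₗ[K] L} (h : LinearMap.ker T = LinearMap.ker T') :
    ∃ g : L ≃ₗ[K] L, ∀ x, g (T x) = T' x := by
  let e0 : LinearMap.range T ≃ₗ[K] LinearMap.range T' :=
    (T.quotKerEquivRange.symm.trans (Submodule.quotEquivOfEq _ _ h)).trans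
      T'.quotKerEquivRange
  have he0 : ∀ x : M, (e0 ⟨T x, LinearMap.mem_range_self T x⟩ : L) = T' x := by
    intro x
    have h1 : T.quotKerEquivRange.symm ⟨T x, LinearMap.mem_range_self T x⟩
        = Submodule.Quotient.mk x := by
      apply T.quotKerEquivRange.injective
      simp [LinearMap.quotKerEquivRange_apply_mk]
    show ((T'.quotKerEquivRange) ((Submodule.quotEquivOfEq _ _ h)
        (T.quotKerEquivRange.symm ⟨T x, LinearMap.mem_range_self T x⟩)) : L) = T' x
    rw [h1, Submodule.quotEquivOfEq_mk, LinearMap.quotKerEquivRange_apply_mk]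
  obtain ⟨P, hP⟩ := Submodule.exists_isCompl (LinearMap.range T)
  obtain ⟨Q, hQ⟩ := Submodule.exists_isCompl (LinearMap.range T')
  have hfr : Module.finrank K P = Module.finrank K Q := by
    have h1 := Submodule.finrank_add_eq_of_isCompl hP
    have h2 := Submodule.finrank_add_eq_of_isCompl hQ
    have h3 : Module.finrank K (LinearMap.range T)
        = Module.finrank K (LinearMap.range T') := e0.finrank_eq
    omega
  let e1 : P ≃ₗ[K] Q := LinearEquiv.ofFinrankEq _ _ hfr
  refine ⟨((Submodule.prodEquivOfIsCompl (LinearMap.range T) P hP).symm.trans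
      (e0.prodCongr e1)).trans (Submodule.prodEquivOfIsCompl (LinearMap.range T') Q hQ),
      fun x => ?_⟩
  have h2 : (Submodule.prodEquivOfIsCompl (LinearMap.range T) P hP).symm (T x)
      = ((⟨T x, LinearMap.mem_range_self T x⟩ : LinearMap.range T), 0) :=
    Submodule.prodEquivOfIsCompl_symm_apply_left (h := hP)
      (x := (⟨T x, LinearMap.mem_range_self T x⟩ : LinearMap.range T))
  simp only [LinearEquiv.trans_apply, h2, LinearEquiv.prodCongr_apply]
  simp [he0 x]

end Aux

theorem stmt_17 (K L : Type*) [Field K] [Fintype K] [Field L] [Fintype L]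
    [Algebra K L]
    (n : ℕ) (b : Basis (Fin n) K L)
    (k m : ℕ) (A : Fin k → (Fin m → L)) (hA : LinearIndependent K A)
    (f : (Submodule.span K (Set.range A) : Submodule K (Fin m → L)) →ₗ[K] (Fin m → L))
    (A' : Fin k → (Fin m → L))
    (hA' : ∀ i, A' i = f ⟨A i, Submodule.subset_span (Set.mem_range_self i)⟩)
    (V U : Fin m → Submodule K (Fin k → K))
    (hV : ∀ j, V j = Submodule.span K
      (Set.range fun t : Fin n => fun i : Fin k => b.repr (A i j) t))
    (hU : ∀ j, U j = Submodule.span K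
      (Set.range fun t : Fin n => fun i : Fin k => b.repr (A' i j) t)) :
    (∃ (π : Equiv.Perm (Fin m)) (g : Fin m → (L ≃ₗ[K] L)),
      ∀ (c : (Submodule.span K (Set.range A) : Submodule K (Fin m → L))) (i : Fin m),
        f c i = g i ((c : Fin m → L) (π i))) ↔
    (∃ π : Equiv.Perm (Fin m), ∀ i, V i = U (π i)) := by
  haveI : FiniteDimensional K L := Module.Finite.of_basis b
  have hVr : ∀ j, V j = LinearMap.range (Dmap K (fun i => A i j)) := fun j => by
    rw [hV j]; exact span_eq_range_Dmap b _
  have hUr : ∀ j, U j = LinearMap.range (Dmap K (fun i => A' i j)) := fun j => by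
    rw [hU j]; exact span_eq_range_Dmap b _
  constructor
  · rintro ⟨π, g, hfg⟩
    have hcol : ∀ r j, A' r j = g j (A r (π j)) := by
      intro r j
      rw [hA' r, hfg]
    refine ⟨π⁻¹, fun i => ?_⟩
    have hU' : ∀ j, U j = V (π j) := by
      intro j
      rw [hUr j, hVr (π j)]
      have : (fun r => A' r j) = fun r => g j (A r (π j)) := by
        funext r; exact hcol r j
      rw [this, range_Dmap_comp]
    rw [hU' (π⁻¹ i)]
    congr 1
    exact (Equiv.apply_symm_apply π i).symm
  · rintro ⟨σ, hσ⟩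
    set π : Equiv.Perm (Fin m) := σ⁻¹ with hπ
    have hUV : ∀ i, U i = V (π i) := by
      intro i
      rw [hσ (π i)]
      congr 1
      exact (Equiv.apply_symm_apply σ i).symm
    have key : ∀ i : Fin m, ∃ g : L ≃ₗ[K] L, ∀ r, g (A r (π i)) = A' r i := by
      intro i
      have hrange : LinearMap.range (Dmap K (fun r => A r (π i)))
          = LinearMap.range (Dmap K (fun r => A' r i)) := by
        rw [← hVr (π i), ← hUr i, hUV i]
      have hker := ker_Tmap_eq_of_range_eq hrange
      obtain ⟨g, hg⟩ := exists_equiv_of_ker_eq hker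
      refine ⟨g, fun r => ?_⟩
      have := hg (Pi.single r 1)
      simpa [Pi.single_apply, Finset.sum_ite_eq'] using this
    choose g hg using key
    refine ⟨π, g, fun c i => ?_⟩
    obtain ⟨c, hc⟩ := c
    induction hc using Submodule.span_induction with
    | mem x hx =>
      obtain ⟨r, rfl⟩ := hx
      show f ⟨A r, _⟩ i = g i (A r (π i))
      rw [hg i r]
      exact (congrFun (hA' r) i).symm
    | zero =>
      show f ⟨0, _⟩ i = g i ((0 : Fin m → L) (π i))
      have : (⟨0, Submodule.zero_mem _⟩ :
          (Submodule.span K (Set.range A) : Submodule K (Fin m → L))) = 0 := rfl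
      simp [this]
    | add x y hx hy ihx ihy =>
      have hxy : (⟨x + y, Submodule.add_mem _ hx hy⟩ :
          (Submodule.span K (Set.range A) : Submodule K (Fin m → L)))
          = ⟨x, hx⟩ + ⟨y, hy⟩ := rfl
      show f ⟨x + y, _⟩ i = g i ((x + y) (π i))
      rw [hxy, map_add]
      simp only [Pi.add_apply]
      simp [ihx, ihy, ← map_add]
    | smul a x hx ihx =>
      have hax : (⟨a • x, Submodule.smul_mem _ a hx⟩ :
          (Submodule.span K (Set.range A) : Submodule K (Fin m → L)))
          = a • ⟨x, hx⟩ := rfl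
      show f ⟨a • x, _⟩ i = g i ((a • x) (π i))
      rw [hax, map_smul]
      simp only [Pi.smul_apply]
      simp [ihx, ← map_smul]
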